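/- For all integers p, q ≥ 0, the polynomial A_{p,q}(t) := Σ_{k=0}^{q} γ_{k,p,q} t^k equals Σ_{W ∈ 𝒫(p,q)} t^{d(W)}, where d(W) is the number of diagonal steps of the weighted Delannoy path W. -/

import Mathlib

/-- A signed `(p,q)`-involution: a pair `(π, ε)` where `π` is an involution of
`{1,…,p+q}` and `ε` assigns a sign (`true` = `+`, `false` = `-`) to each fixed
point of `π` (we normalize `ε` to be `true` on non-fixed points), such that the
number of fixed points with sign `+` minus the number of fixed points with
sign `-` equals `p - q`. -/
def IsSignedInv (p q : ℕ) (x : Equiv.Perm (Fin (p + q)) × (Fin (p + q) → Bool)) : Prop :=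
  x.1 * x.1 = 1 ∧ (∀ i, x.1 i ≠ i → x.2 i = true) ∧
    ((Finset.univ.filter fun i => x.1 i = i ∧ x.2 i = true).card : ℤ) -
      ((Finset.univ.filter fun i => x.1 i = i ∧ x.2 i = false).card : ℤ) = (p : ℤ) - (q : ℤ)

/-- `γ_{k,p,q}`: the number of signed `(p,q)`-involutions whose underlying
involution has exactly `k` two-cycles, i.e. exactly `2k` non-fixed points. -/
noncomputable def gammaCount (k p q : ℕ) : ℕ :=
  Nat.card {x : Equiv.Perm (Fin (p + q)) × (Fin (p + q) → Bool) //
    IsSignedInv p q x ∧ (Finset.univ.filter fun i => x.1 i ≠ i).card = 2 * k}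

/-- `α_{p,q}`: the number of signed `(p,q)`-involutions. -/
noncomputable def alphaCount (p q : ℕ) : ℕ :=
  Nat.card {x : Equiv.Perm (Fin (p + q)) × (Fin (p + q) → Bool) // IsSignedInv p q x}
/-- A step of a lattice path: east `(1,0)`, north `(0,1)`, or diagonal `(1,1)`. -/
inductive DStep : Type
  | E | N | D
deriving DecidableEq

/-- The displacement vector of a step. -/
def stepVec : DStep → ℕ × ℕ
  | .E => (1, 0)
  | .N => (0, 1)
  | .D => (1, 1)

/-- A `(p,q)` Delannoy path: a sequence of steps `E`, `N`, `D` whose total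
displacement from `(0,0)` is `(p,q)`. -/
def IsDelannoy (p q : ℕ) (l : List DStep) : Prop :=
  (l.map stepVec).sum = (p, q)

/-- `D(p,q)`, the number of `(p,q)` Delannoy paths. -/
noncomputable def delannoyNum (p q : ℕ) : ℕ :=
  Nat.card {l : List DStep // IsDelannoy p q l}

/-- The weight of the part of a Delannoy path starting at the given lattice
point: a diagonal step starting at `(a,b)` contributes a factor `a+b+1`,
other steps contribute `1`. -/
def weightFrom : ℕ × ℕ → List DStep → ℕ
  | _, [] => 1
  | ab, s :: t => (if s = DStep.D then ab.1 + ab.2 + 1 else 1) * weightFrom (ab + stepVec s) t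

/-- The weight `ω(L)` of a Delannoy path `L` (starting at the origin): the
product over all diagonal steps going from a point `(a,b)` to `(a+1,b+1)`
of the numbers `a+b+1`. -/
def weight (l : List DStep) : ℕ := weightFrom (0, 0) l

/-- Validity of labels along a weighted Delannoy path starting at the given
lattice point: a diagonal step starting at `(a,b)` may carry any label `m`
with `1 ≤ m ≤ a+b+1`; non-diagonal steps carry no label (normalized to `0`). -/
def IsWeightedFrom : ℕ × ℕ → List (DStep × ℕ) → Prop
  | _, [] => True
  | ab, s :: t =>
      (if s.1 = DStep.D then 1 ≤ s.2 ∧ s.2 ≤ ab.1 + ab.2 + 1 else s.2 = 0) ∧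
        IsWeightedFrom (ab + stepVec s.1) t

/-- A weighted `(p,q)` Delannoy path: a `(p,q)` Delannoy path together with an
integer label on each diagonal step, a diagonal step from `(a,b)` to
`(a+1,b+1)` carrying a label `m` with `1 ≤ m ≤ a+b+1`. -/
def IsWeightedDelannoy (p q : ℕ) (l : List (DStep × ℕ)) : Prop :=
  ((l.map fun s => stepVec s.1).sum = (p, q)) ∧ IsWeightedFrom (0, 0) l

/-- The number of diagonal steps of a weighted Delannoy path. -/
def dcount (l : List (DStep × ℕ)) : ℕ := (l.filter fun s => decide (s.1 = DStep.D)).length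


instance : Fintype DStep :=
  ⟨⟨{.E, .N, .D}, by decide⟩, fun x => by cases x <;> decide⟩

open Finset Polynomial

namespace Stmt10Aux

def disp (l : List (DStep × ℕ)) : ℕ × ℕ := (l.map fun s => stepVec s.1).sum

@[simp] lemma disp_nil : disp ([] : List (DStep × ℕ)) = (0, 0) := rfl

@[simp] lemma disp_cons (a : DStep × ℕ) (t : List (DStep × ℕ)) :
    disp (a :: t) = stepVec a.1 + disp t := by simp [disp]

@[simp] lemma disp_append (l t : List (DStep × ℕ)) :
    disp (l ++ t) = disp l + disp t := by simp [disp]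

lemma isWeightedFrom_append (l : List (DStep × ℕ)) (s : DStep × ℕ) :
    ∀ ab : ℕ × ℕ, IsWeightedFrom ab (l ++ [s]) ↔ IsWeightedFrom ab l ∧
      (if s.1 = DStep.D then 1 ≤ s.2 ∧ s.2 ≤ (ab + disp l).1 + (ab + disp l).2 + 1
       else s.2 = 0) := by
  induction l with
  | nil => intro ab; simp [IsWeightedFrom]
  | cons a t ih =>
      intro ab
      have h := ih (ab + stepVec a.1)
      simp only [List.cons_append, IsWeightedFrom, disp_cons, ← add_assoc,
        List.append_eq] at h ⊢
      rw [h]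
      tauto

lemma label_le (l : List (DStep × ℕ)) :
    ∀ ab : ℕ × ℕ, IsWeightedFrom ab l → ∀ x ∈ l,
      x.2 ≤ ab.1 + ab.2 + (disp l).1 + (disp l).2 + 1 := by
  induction l with
  | nil => simp
  | cons a t ih =>
      intro ab h x hx
      obtain ⟨h1, h2⟩ := h
      rcases List.mem_cons.mp hx with rfl | hx
      · by_cases hD : x.1 = DStep.D
        · rw [if_pos hD] at h1
          simp only [disp_cons, Prod.fst_add, Prod.snd_add]
          omega
        · rw [if_neg hD] at h1; omega
      · have := ih (ab + stepVec a.1) h2 x hx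
        simp only [Prod.fst_add, Prod.snd_add] at this
        simp only [disp_cons, Prod.fst_add, Prod.snd_add]
        omega

lemma stepVec_pos (s : DStep) : 1 ≤ (stepVec s).1 + (stepVec s).2 := by
  cases s <;> simp [stepVec]

lemma length_le (l : List (DStep × ℕ)) : l.length ≤ (disp l).1 + (disp l).2 := by
  induction l with
  | nil => simp
  | cons a t ih =>
      have := stepVec_pos a.1
      simp only [disp_cons, Prod.fst_add, Prod.snd_add, List.length_cons]
      omega

noncomputable instance fintypeWD (p q : ℕ) :
    Fintype {l : List (DStep × ℕ) // IsWeightedDelannoy p q l} := by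
  have : Finite {l : List (DStep × ℕ) // IsWeightedDelannoy p q l} := by
    have hfin : Finite {l : List (DStep × Fin (p + q + 2)) // l.length ≤ p + q} :=
      (List.finite_length_le (DStep × Fin (p + q + 2)) (p + q)).to_subtype
    set f : {l : List (DStep × ℕ) // IsWeightedDelannoy p q l} →
        {l : List (DStep × Fin (p + q + 2)) // l.length ≤ p + q} :=
      fun x => ⟨x.1.attach.map (fun y => (y.1.1,
        ⟨y.1.2, by
          have hd : disp x.1 = (p, q) := x.2.1
          have := label_le x.1 (0, 0) x.2.2 y.1 y.2
          rw [hd] at this; simp at this; omega⟩)), by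
        simp only [List.length_map, List.length_attach]
        have h1 := length_le x.1
        have hd : disp x.1 = (p, q) := x.2.1
        rw [hd] at h1; simpa using h1⟩ with hf
    have hinv : ∀ x, (f x).1.map (fun z : DStep × Fin (p + q + 2) => (z.1, z.2.val)) = x.1 := by
      intro x
      rw [hf]
      simp only [List.map_map, Function.comp_def]
      rw [List.attach_map_val (l := x.1) (f := fun a => (a.1, a.2))]
      simp
    refine Finite.of_injective f ?_
    intro x y h
    apply Subtype.ext
    rw [← hinv x, ← hinv y, h]
  exact Fintype.ofFinite _

noncomputable def F (p q : ℕ) : Polynomial ℕ :=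
  ∑ᶠ W : {l : List (DStep × ℕ) // IsWeightedDelannoy p q l},
    (Polynomial.X : Polynomial ℕ) ^ dcount W.1

lemma IWF_any (l : List (DStep × ℕ)) (hl : ∀ x ∈ l, x.1 ≠ DStep.D ∧ x.2 = 0) :
    ∀ ab, IsWeightedFrom ab l := by
  induction l with
  | nil => intro ab; trivial
  | cons a t ih =>
      intro ab
      refine ⟨?_, ih (fun x hx => hl x (List.mem_cons_of_mem a hx)) _⟩
      have := hl a (List.mem_cons_self (a := a) (l := t))
      rw [if_neg this.1]; exact this.2

lemma eq_replicate_E (l : List (DStep × ℕ)) :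
    ∀ p : ℕ, ∀ ab, IsWeightedFrom ab l → disp l = (p, 0) →
      l = List.replicate p (DStep.E, 0) := by
  induction l with
  | nil =>
      intro p ab _ h
      simp only [disp_nil, Prod.mk.injEq] at h
      rw [← h.1]; rfl
  | cons a t ih =>
      rintro p ab ⟨h1, h2⟩ hd
      obtain ⟨a1, a2⟩ := a
      have hfst : (stepVec a1).1 + (disp t).1 = p := by
        have := congrArg Prod.fst hd; simpa using this
      have hsnd : (stepVec a1).2 + (disp t).2 = 0 := by
        have := congrArg Prod.snd hd; simpa using this
      have hE : a1 = DStep.E := by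
        cases a1 <;> simp [stepVec] at hsnd ⊢
      subst hE
      simp only [stepVec] at hfst hsnd h1 h2
      rw [if_neg (by decide)] at h1
      subst h1
      have htr : t = List.replicate (disp t).1 (DStep.E, 0) :=
        ih (disp t).1 _ h2 (by
          have : (disp t).2 = 0 := by omega
          rw [← this])
      rw [← hfst, Nat.add_comm, List.replicate_succ]
      exact congrArg (List.cons _) htr

lemma eq_replicate_N (l : List (DStep × ℕ)) :
    ∀ q : ℕ, ∀ ab, IsWeightedFrom ab l → disp l = (0, q) →
      l = List.replicate q (DStep.N, 0) := by
  induction l with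
  | nil =>
      intro q ab _ h
      simp only [disp_nil, Prod.mk.injEq] at h
      rw [← h.2]; rfl
  | cons a t ih =>
      rintro q ab ⟨h1, h2⟩ hd
      obtain ⟨a1, a2⟩ := a
      have hfst : (stepVec a1).1 + (disp t).1 = 0 := by
        have := congrArg Prod.fst hd; simpa using this
      have hsnd : (stepVec a1).2 + (disp t).2 = q := by
        have := congrArg Prod.snd hd; simpa using this
      have hN : a1 = DStep.N := by
        cases a1 <;> simp [stepVec] at hfst ⊢
      subst hN
      simp only [stepVec] at hfst hsnd h1 h2
      rw [if_neg (by decide)] at h1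
      subst h1
      have htr : t = List.replicate (disp t).2 (DStep.N, 0) :=
        ih (disp t).2 _ h2 (by
          have : (disp t).1 = 0 := by omega
          rw [← this])
      rw [← hsnd, Nat.add_comm, List.replicate_succ]
      exact congrArg (List.cons _) htr

lemma disp_replicate_E (p : ℕ) : disp (List.replicate p (DStep.E, 0)) = (p, 0) := by
  induction p with
  | zero => rfl
  | succ n ih =>
      rw [List.replicate_succ, disp_cons, ih]
      simp [stepVec, Prod.ext_iff, Nat.add_comm]

lemma disp_replicate_N (q : ℕ) : disp (List.replicate q (DStep.N, 0)) = (0, q) := by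
  induction q with
  | zero => rfl
  | succ n ih =>
      rw [List.replicate_succ, disp_cons, ih]
      simp [stepVec, Prod.ext_iff, Nat.add_comm]

lemma mem_replicate_aux (c : DStep) (h : c ≠ DStep.D) (n : ℕ) :
    ∀ x ∈ List.replicate n (c, 0), x.1 ≠ DStep.D ∧ x.2 = 0 := by
  intro x hx
  rw [List.eq_of_mem_replicate hx]
  exact ⟨h, rfl⟩

lemma F_p0 (p : ℕ) : F p 0 = 1 := by
  haveI : Unique {l : List (DStep × ℕ) // IsWeightedDelannoy p 0 l} := {
    default := ⟨List.replicate p (DStep.E, 0),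
      disp_replicate_E p, IWF_any _ (mem_replicate_aux _ (by decide) p) _⟩
    uniq := by
      intro x
      apply Subtype.ext
      exact eq_replicate_E x.1 p (0,0) x.2.2 x.2.1 }
  rw [F, finsum_eq_sum_of_fintype, Fintype.sum_unique]
  have hd : dcount (List.replicate p (DStep.E, 0)) = 0 := by
    simp [dcount, List.filter_replicate]
  have he := eq_replicate_E (default : {l : List (DStep × ℕ) // IsWeightedDelannoy p 0 l}).1
    p (0,0) (default : {l : List (DStep × ℕ) // IsWeightedDelannoy p 0 l}).2.2
    (default : {l : List (DStep × ℕ) // IsWeightedDelannoy p 0 l}).2.1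
  rw [he, hd, pow_zero]

lemma F_0q (q : ℕ) : F 0 q = 1 := by
  haveI : Unique {l : List (DStep × ℕ) // IsWeightedDelannoy 0 q l} := {
    default := ⟨List.replicate q (DStep.N, 0),
      disp_replicate_N q, IWF_any _ (mem_replicate_aux _ (by decide) q) _⟩
    uniq := by
      intro x
      apply Subtype.ext
      exact eq_replicate_N x.1 q (0,0) x.2.2 x.2.1 }
  rw [F, finsum_eq_sum_of_fintype, Fintype.sum_unique]
  have hd : dcount (List.replicate q (DStep.N, 0)) = 0 := by
    simp [dcount, List.filter_replicate]
  have he := eq_replicate_N (default : {l : List (DStep × ℕ) // IsWeightedDelannoy 0 q l}).1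
    q (0,0) (default : {l : List (DStep × ℕ) // IsWeightedDelannoy 0 q l}).2.2
    (default : {l : List (DStep × ℕ) // IsWeightedDelannoy 0 q l}).2.1
  rw [he, hd, pow_zero]

end Stmt10Aux

namespace Stmt10Aux

lemma dcount_append (l : List (DStep × ℕ)) (s : DStep × ℕ) :
    dcount (l ++ [s]) = dcount l + (if s.1 = DStep.D then 1 else 0) := by
  simp only [dcount, List.filter_append, List.length_append]
  by_cases h : s.1 = DStep.D <;> simp [h]

lemma concat_inj {α : Type*} {l1 l2 : List α} {a b : α} (h : l1 ++ [a] = l2 ++ [b]) :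
    l1 = l2 ∧ a = b := by
  have h1 := congrArg List.reverse h
  simp only [List.reverse_append, List.reverse_cons, List.reverse_nil, List.nil_append,
    List.singleton_append, List.cons.injEq] at h1
  exact ⟨List.reverse_injective h1.2, h1.1⟩

lemma IWD_append {p q : ℕ} {l : List (DStep × ℕ)} (h : IsWeightedDelannoy p q l)
    (s : DStep × ℕ)
    (hs : if s.1 = DStep.D then 1 ≤ s.2 ∧ s.2 ≤ p + q + 1 else s.2 = 0) :
    IsWeightedDelannoy (p + (stepVec s.1).1) (q + (stepVec s.1).2) (l ++ [s]) := by
  have hd : disp l = (p, q) := h.1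
  constructor
  · show disp (l ++ [s]) = _
    rw [disp_append, hd]
    show ((p, q) : ℕ × ℕ) + disp [s] = _
    simp [disp, Prod.ext_iff]
  · rw [isWeightedFrom_append l s (0, 0)]
    refine ⟨h.2, ?_⟩
    rw [hd]
    simpa using hs

abbrev pathSum (p q : ℕ) : Type :=
  {l : List (DStep × ℕ) // IsWeightedDelannoy p (q+1) l} ⊕
  ({l : List (DStep × ℕ) // IsWeightedDelannoy (p+1) q l} ⊕
   (Fin (p + q + 1) × {l : List (DStep × ℕ) // IsWeightedDelannoy p q l}))

def Phi (p q : ℕ) : pathSum p q → {l : List (DStep × ℕ) // IsWeightedDelannoy (p+1) (q+1) l} :=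
  fun z => match z with
  | .inl ⟨l, h⟩ => ⟨l ++ [(DStep.E, 0)], IWD_append h (DStep.E, 0) (by simp [stepVec])⟩
  | .inr (.inl ⟨l, h⟩) => ⟨l ++ [(DStep.N, 0)], by
      have := IWD_append h (DStep.N, 0) (by simp [stepVec])
      simpa [stepVec] using this⟩
  | .inr (.inr (j, ⟨l, h⟩)) => ⟨l ++ [(DStep.D, j.val + 1)], by
      have := IWD_append h (DStep.D, j.val + 1)
        (by simp [stepVec]; omega)
      simpa [stepVec] using this⟩

lemma Phi_bij (p q : ℕ) : Function.Bijective (Phi p q) := by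
  constructor
  · rintro (⟨l1, h1⟩ | ⟨l1, h1⟩ | ⟨j1, l1, h1⟩) (⟨l2, h2⟩ | ⟨l2, h2⟩ | ⟨j2, l2, h2⟩) h <;>
      simp only [Phi, Subtype.mk.injEq, Subtype.ext_iff] at h <;>
      obtain ⟨hl, hs⟩ := concat_inj h
    · simp [Subtype.ext_iff, hl]
    · exact absurd hs (by simp)
    · exact absurd hs (by simp)
    · exact absurd hs (by simp)
    · simp [Subtype.ext_iff, hl]
    · exact absurd hs (by simp)
    · exact absurd hs (by simp)
    · exact absurd hs (by simp)
    · have hj : j1 = j2 := by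
        have := congrArg Prod.snd hs
        simp at this
        exact Fin.ext this
      simp [Prod.ext_iff, Subtype.ext_iff, hl, hj]
  · rintro ⟨l, hl⟩
    have hne : l ≠ [] := by
      rintro rfl
      have h0 : ((0, 0) : ℕ × ℕ) = (p + 1, q + 1) := by simpa [Prod.ext_iff] using hl.1
      rw [Prod.ext_iff] at h0
      simp at h0
    obtain ⟨L, s, rfl⟩ : ∃ L s, l = L ++ [s] := by
      rcases List.eq_nil_or_concat l with h | ⟨L, s, h⟩
      · exact absurd h hne
      · exact ⟨L, s, by simpa [List.concat_eq_append] using h⟩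
    have hd : disp L + stepVec s.1 = (p + 1, q + 1) := by
      have := hl.1
      show disp L + _ = _
      rw [show disp L + stepVec s.1 = disp (L ++ [s]) by simp [disp]]
      exact this
    have hwf := (isWeightedFrom_append L s (0, 0)).mp hl.2
    have hfst : (disp L).1 + (stepVec s.1).1 = p + 1 := by
      have := congrArg Prod.fst hd; simpa using this
    have hsnd : (disp L).2 + (stepVec s.1).2 = q + 1 := by
      have := congrArg Prod.snd hd; simpa using this
    obtain ⟨st, m⟩ := s
    cases st
    · -- E
      have hL : disp L = (p, q + 1) := by
        simp [stepVec] at hfst hsnd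
        rw [Prod.ext_iff]; constructor <;> simp <;> omega
      have hm : m = 0 := by
        have := hwf.2; rw [if_neg (by simp)] at this; exact this
      refine ⟨.inl ⟨L, hL, hwf.1⟩, ?_⟩
      simp [Phi, hm]
    · -- N
      have hL : disp L = (p + 1, q) := by
        simp [stepVec] at hfst hsnd
        rw [Prod.ext_iff]; constructor <;> simp <;> omega
      have hm : m = 0 := by
        have := hwf.2; rw [if_neg (by simp)] at this; exact this
      refine ⟨.inr (.inl ⟨L, hL, hwf.1⟩), ?_⟩
      simp [Phi, hm]
    · -- D
      have hL : disp L = (p, q) := by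
        simp [stepVec] at hfst hsnd
        rw [Prod.ext_iff]; constructor <;> simp <;> omega
      have hm : 1 ≤ m ∧ m ≤ p + q + 1 := by
        have := hwf.2; rw [if_pos rfl] at this
        rw [hL] at this
        simpa using this
      refine ⟨.inr (.inr (⟨m - 1, by omega⟩, ⟨L, hL, hwf.1⟩)), ?_⟩
      simp only [Phi, Subtype.mk.injEq]
      have hmm : ((⟨m - 1, by omega⟩ : Fin (p + q + 1)) : ℕ) + 1 = m := by
        show m - 1 + 1 = m; omega
      exact Subtype.ext (by show L ++ [(DStep.D, m - 1 + 1)] = L ++ [(DStep.D, m)]; rw [Nat.sub_add_cancel hm.1])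

lemma F_rec (p q : ℕ) :
    F (p+1) (q+1) = F p (q+1) + F (p+1) q + ((p+q+1 : ℕ) : Polynomial ℕ) * (X * F p q) := by
  classical
  simp only [F, finsum_eq_sum_of_fintype]
  rw [← Fintype.sum_bijective (Phi p q) (Phi_bij p q)
    (fun z => (X : Polynomial ℕ) ^ dcount ((Phi p q) z).1)
    (fun x => (X : Polynomial ℕ) ^ dcount x.1) (fun z => rfl)]
  rw [Fintype.sum_sum_type, Fintype.sum_sum_type, Fintype.sum_prod_type]
  have hE : ∀ (x : {l : List (DStep × ℕ) // IsWeightedDelannoy p (q+1) l}),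
      (X : Polynomial ℕ) ^ dcount ((Phi p q) (.inl x)).1 = X ^ dcount x.1 := by
    rintro ⟨l, h⟩
    simp [Phi, dcount_append]
  have hN : ∀ (x : {l : List (DStep × ℕ) // IsWeightedDelannoy (p+1) q l}),
      (X : Polynomial ℕ) ^ dcount ((Phi p q) (.inr (.inl x))).1 = X ^ dcount x.1 := by
    rintro ⟨l, h⟩
    simp [Phi, dcount_append]
  have hD : ∀ (j : Fin (p+q+1)) (x : {l : List (DStep × ℕ) // IsWeightedDelannoy p q l}),
      (X : Polynomial ℕ) ^ dcount ((Phi p q) (.inr (.inr (j, x)))).1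
        = X * X ^ dcount x.1 := by
    rintro j ⟨l, h⟩
    simp [Phi, dcount_append, pow_succ, mul_comm]
  have hj : ∀ j : Fin (p+q+1),
      ∑ x : {l : List (DStep × ℕ) // IsWeightedDelannoy p q l},
        (X : Polynomial ℕ) ^ dcount ((Phi p q) (.inr (.inr (j, x)))).1
      = X * ∑ x : {l : List (DStep × ℕ) // IsWeightedDelannoy p q l},
          (X : Polynomial ℕ) ^ dcount x.1 := fun j => by
    rw [Finset.sum_congr rfl (fun x _ => hD j x), ← Finset.mul_sum]
  rw [Finset.sum_congr rfl (fun x _ => hE x), Finset.sum_congr rfl (fun x _ => hN x),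
    Finset.sum_congr rfl (fun j _ => hj j), Finset.sum_const]
  simp only [Finset.card_univ, Fintype.card_fin, nsmul_eq_mul]
  ring

end Stmt10Aux

namespace Stmt10Aux

def Cond (n k : ℕ) (d : ℤ) (x : Equiv.Perm (Fin n) × (Fin n → Bool)) : Prop :=
  x.1 * x.1 = 1 ∧ (∀ i, x.1 i ≠ i → x.2 i = true) ∧
    (((Finset.univ.filter fun i => x.1 i = i ∧ x.2 i = true).card : ℤ) -
      ((Finset.univ.filter fun i => x.1 i = i ∧ x.2 i = false).card : ℤ) = d) ∧
    (Finset.univ.filter fun i => x.1 i ≠ i).card = 2 * k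

noncomputable def g (n k : ℕ) (d : ℤ) : ℕ :=
  Nat.card {x : Equiv.Perm (Fin n) × (Fin n → Bool) // Cond n k d x}

lemma inv_iff {n : ℕ} (π : Equiv.Perm (Fin n)) : π * π = 1 ↔ ∀ i, π (π i) = i := by
  rw [Equiv.ext_iff]
  apply forall_congr'
  intro i
  rw [Equiv.Perm.mul_apply, Equiv.Perm.one_apply]

lemma cond_bound {n k : ℕ} {d : ℤ} {x} (h : Cond n k d x) : 2 * k + d.natAbs ≤ n := by
  classical
  obtain ⟨-, -, h3, h4⟩ := h
  have hsum : (Finset.univ.filter fun i => x.1 i ≠ i).card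
      + ((Finset.univ.filter fun i => x.1 i = i ∧ x.2 i = true).card
      + (Finset.univ.filter fun i => x.1 i = i ∧ x.2 i = false).card) = n := by
    rw [Finset.card_filter, Finset.card_filter, Finset.card_filter,
      ← Finset.sum_add_distrib, ← Finset.sum_add_distrib]
    have : ∀ i ∈ Finset.univ, ((if x.1 i ≠ i then 1 else 0)
        + ((if x.1 i = i ∧ x.2 i = true then 1 else 0)
        + (if x.1 i = i ∧ x.2 i = false then 1 else 0)) : ℕ) = 1 := by
      intro i _
      by_cases h1 : x.1 i = i <;> cases h2 : x.2 i <;> simp [h1, h2]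
    rw [Finset.sum_congr rfl this]
    simp
  omega

lemma g_eq_zero {n k : ℕ} {d : ℤ} (h : n < 2 * k + d.natAbs) : g n k d = 0 := by
  have he : IsEmpty {x : Equiv.Perm (Fin n) × (Fin n → Bool) // Cond n k d x} :=
    ⟨fun x => absurd (cond_bound x.2) (by omega)⟩
  rw [g]
  exact @Nat.card_of_isEmpty _ he

lemma all_fixed_card {n : ℕ} (ε : Fin n → Bool) :
    (Finset.univ.filter fun i => (1 : Equiv.Perm (Fin n)) i = i ∧ ε i = true).card
      + (Finset.univ.filter fun i => (1 : Equiv.Perm (Fin n)) i = i ∧ ε i = false).card = n := by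
  classical
  rw [Finset.card_filter, Finset.card_filter, ← Finset.sum_add_distrib]
  have : ∀ i ∈ Finset.univ, ((if (1 : Equiv.Perm (Fin n)) i = i ∧ ε i = true then 1 else 0)
      + (if (1 : Equiv.Perm (Fin n)) i = i ∧ ε i = false then 1 else 0) : ℕ) = 1 := by
    intro i _
    cases h2 : ε i <;> simp [h2]
  rw [Finset.sum_congr rfl this]
  simp

lemma perm_eq_one_of_moved_zero {n : ℕ} {π : Equiv.Perm (Fin n)}
    (h : (Finset.univ.filter fun i => π i ≠ i).card = 0) : π = 1 := by
  classical
  rw [Finset.card_eq_zero, Finset.filter_eq_empty_iff] at h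
  apply Equiv.ext
  intro i
  have := h (Finset.mem_univ i)
  simpa using this

lemma g_diag (n : ℕ) : g n 0 (n : ℤ) = 1 := by
  classical
  rw [g, Nat.card_eq_one_iff_unique]
  have hc : Cond n 0 (n : ℤ) (1, fun _ => true) := by
    refine ⟨mul_one 1, fun i hi => absurd rfl hi, ?_, ?_⟩
    · simp
    · simp
  constructor
  · constructor
    rintro ⟨x, hx⟩ ⟨y, hy⟩
    have key : ∀ z : Equiv.Perm (Fin n) × (Fin n → Bool), Cond n 0 (n : ℤ) z →
        z = (1, fun _ => true) := by
      rintro ⟨π, ε⟩ ⟨-, -, h3, h4⟩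
      have hid : π = 1 := perm_eq_one_of_moved_zero (by simpa using h4)
      subst hid
      dsimp only at h3
      have htf := all_fixed_card ε
      have hF : (Finset.univ.filter fun i => (1 : Equiv.Perm (Fin n)) i = i ∧ ε i = false).card
          = 0 := by omega
      rw [Finset.card_eq_zero, Finset.filter_eq_empty_iff] at hF
      have : ∀ i, ε i = true := by
        intro i
        have := hF (Finset.mem_univ i)
        simp at this
        exact this
      exact Prod.ext rfl (funext this)
    rw [Subtype.mk.injEq, key x hx, key y hy]
  · exact ⟨⟨(1, fun _ => true), hc⟩⟩

lemma g_antidiag (n : ℕ) : g n 0 (-(n : ℤ)) = 1 := by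
  classical
  rw [g, Nat.card_eq_one_iff_unique]
  have hc : Cond n 0 (-(n : ℤ)) (1, fun _ => false) := by
    refine ⟨mul_one 1, fun i hi => absurd rfl hi, ?_, ?_⟩
    · simp
    · simp
  constructor
  · constructor
    rintro ⟨x, hx⟩ ⟨y, hy⟩
    have key : ∀ z : Equiv.Perm (Fin n) × (Fin n → Bool), Cond n 0 (-(n : ℤ)) z →
        z = (1, fun _ => false) := by
      rintro ⟨π, ε⟩ ⟨-, -, h3, h4⟩
      have hid : π = 1 := perm_eq_one_of_moved_zero (by simpa using h4)
      subst hid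
      dsimp only at h3
      have htf := all_fixed_card ε
      have hT : (Finset.univ.filter fun i => (1 : Equiv.Perm (Fin n)) i = i ∧ ε i = true).card
          = 0 := by omega
      rw [Finset.card_eq_zero, Finset.filter_eq_empty_iff] at hT
      have : ∀ i, ε i = false := by
        intro i
        have := hT (Finset.mem_univ i)
        simp at this
        exact this
      exact Prod.ext rfl (funext this)
    rw [Subtype.mk.injEq, key x hx, key y hy]
  · exact ⟨⟨(1, fun _ => false), hc⟩⟩

lemma card_fiber {A : Type*} [Finite A] {β : Type*} [Fintype β] (f : A → β) :
    Nat.card A = ∑ b : β, Nat.card {a : A // f a = b} := by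
  classical
  cases nonempty_fintype A
  rw [← Nat.card_congr (Equiv.sigmaFiberEquiv f), Nat.card_eq_fintype_card,
    Fintype.card_sigma]
  simp [Nat.card_eq_fintype_card]

lemma card_split {A : Type*} [Finite A] (P : A → Prop) {β : Type*} [Fintype β] (f : A → β) :
    Nat.card {x // P x} = ∑ b : β, Nat.card {x // P x ∧ f x = b} := by
  rw [card_fiber (fun y : {x // P x} => f y.1)]
  exact Finset.sum_congr rfl fun b _ =>
    Nat.card_congr (Equiv.subtypeSubtypeEquivSubtypeInter P (fun x => f x = b))

lemma card_succ {n : ℕ} (P : Fin (n+1) → Prop) [DecidablePred P] :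
    (Finset.univ.filter P).card
      = (if P 0 then 1 else 0) + (Finset.univ.filter fun i : Fin n => P i.succ).card := by
  classical
  rw [Finset.card_filter, Finset.card_filter, Fin.sum_univ_succ]

end Stmt10Aux

namespace Stmt10Aux

def up1fun {n : ℕ} (τ : Equiv.Perm (Fin n)) : Fin (n+1) → Fin (n+1) :=
  Fin.cases 0 (fun j => (τ j).succ)

@[simp] lemma up1fun_zero {n : ℕ} (τ : Equiv.Perm (Fin n)) : up1fun τ 0 = 0 :=
  Fin.cases_zero

@[simp] lemma up1fun_succ {n : ℕ} (τ : Equiv.Perm (Fin n)) (j : Fin n) :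
    up1fun τ j.succ = (τ j).succ :=
  Fin.cases_succ j

lemma up1fun_inv {n : ℕ} (τ : Equiv.Perm (Fin n)) (h : τ * τ = 1) :
    Function.Involutive (up1fun τ) := by
  rw [inv_iff] at h
  intro i
  refine Fin.cases ?_ ?_ i
  · simp
  · intro j
    simp [h j]

def up1 {n : ℕ} (τ : Equiv.Perm (Fin n)) (h : τ * τ = 1) : Equiv.Perm (Fin (n+1)) :=
  (up1fun_inv τ h).toPerm

@[simp] lemma up1_apply {n : ℕ} (τ : Equiv.Perm (Fin n)) (h : τ * τ = 1) (i : Fin (n+1)) :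
    up1 τ h i = up1fun τ i := by
  simp [up1, Function.Involutive.coe_toPerm]

lemma cond_shift1_iff {n K : ℕ} {dd : ℤ} {b : Bool}
    (π : Equiv.Perm (Fin (n+1))) (ε : Fin (n+1) → Bool)
    (τ : Equiv.Perm (Fin n)) (e : Fin n → Bool)
    (h0 : π 0 = 0) (hs : ∀ i, π i.succ = (τ i).succ)
    (hε0 : ε 0 = b) (hεs : ∀ i, ε i.succ = e i) :
    Cond (n+1) K dd (π, ε) ↔ Cond n K (if b then dd - 1 else dd + 1) (τ, e) := by
  classical
  have hfix : ∀ i : Fin n, (π i.succ = i.succ ↔ τ i = i) := by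
    intro i; rw [hs i, Fin.succ_inj]
  have cT : (Finset.univ.filter fun i => π i = i ∧ ε i = true).card
      = (if b = true then 1 else 0)
        + (Finset.univ.filter fun i => τ i = i ∧ e i = true).card := by
    rw [card_succ]
    congr 1
    · simp [h0, hε0]
    · apply congrArg
      apply Finset.filter_congr
      intro i _
      rw [hfix i, hεs i]
  have cF : (Finset.univ.filter fun i => π i = i ∧ ε i = false).card
      = (if b = false then 1 else 0)
        + (Finset.univ.filter fun i => τ i = i ∧ e i = false).card := by
    rw [card_succ]
    congr 1
    · simp [h0, hε0]
    · apply congrArg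
      apply Finset.filter_congr
      intro i _
      rw [hfix i, hεs i]
  have cM : (Finset.univ.filter fun i => π i ≠ i).card
      = (Finset.univ.filter fun i => τ i ≠ i).card := by
    rw [card_succ]
    rw [if_neg (by simp [h0])]
    rw [zero_add]
    apply congrArg
    apply Finset.filter_congr
    intro i _
    rw [not_iff_not]
    exact hfix i
  unfold Cond
  dsimp only
  apply and_congr
  · rw [inv_iff, inv_iff]
    constructor
    · intro h i
      have := h i.succ
      rw [hs i, hs (τ i)] at this
      exact Fin.succ_inj.mp this
    · intro h i
      refine Fin.cases ?_ ?_ i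
      · rw [h0, h0]
      · intro j
        rw [hs j, hs (τ j), h j]
  apply and_congr
  · constructor
    · intro h i hi
      have := h i.succ (by rw [hs i]; exact fun hh => hi (Fin.succ_inj.mp hh))
      rwa [hεs i] at this
    · intro h i
      refine Fin.cases ?_ ?_ i
      · intro hi; exact absurd h0 hi
      · intro j hj
        rw [hεs j]
        exact h j (fun hh => hj (by rw [hs j, hh]))
  apply and_congr
  · rw [cT, cF]
    cases b <;> simp <;> omega
  · rw [cM]

lemma shift1 (n K : ℕ) (dd : ℤ) (b : Bool) :
    Nat.card {x : Equiv.Perm (Fin (n+1)) × (Fin (n+1) → Bool) //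
        Cond (n+1) K dd x ∧ x.1 0 = 0 ∧ x.2 0 = b}
      = g n K (if b then dd - 1 else dd + 1) := by
  classical
  rw [g]
  symm
  have habs : ∀ (τ : Equiv.Perm (Fin n)) (e : Fin n → Bool)
      (h : Cond n K (if b then dd - 1 else dd + 1) (τ, e)),
      Cond (n+1) K dd (up1 τ h.1, Fin.cases b e) ∧ (up1 τ h.1) 0 = 0
        ∧ (Fin.cases b e : Fin (n+1) → Bool) 0 = b := by
    intro τ e h
    refine ⟨(cond_shift1_iff _ _ τ e (by simp) (by simp) (by simp) (fun i => by simp)).mpr h,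
      by simp, by simp⟩
  apply Nat.card_eq_of_bijective
    (f := fun y => ⟨(up1 y.1.1 y.2.1, Fin.cases b y.1.2), by
      obtain ⟨⟨τ, e⟩, h⟩ := y
      exact habs τ e h⟩)
  constructor
  · rintro ⟨⟨τ, e⟩, hy⟩ ⟨⟨τ', e'⟩, hy'⟩ h
    rw [Subtype.mk.injEq, Prod.mk.injEq] at h
    apply Subtype.ext
    rw [Prod.mk.injEq]
    constructor
    · apply Equiv.ext
      intro j
      have := congrFun (congrArg (fun (σ : Equiv.Perm (Fin (n+1))) => (σ : Fin (n+1) → Fin (n+1))) h.1) j.succ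
      simp at this
      exact this
    · funext j
      have := congrFun h.2 j.succ
      simpa using this
  · rintro ⟨⟨π, ε⟩, hc, h0, hb⟩
    -- build τ
    have hinv : ∀ i, π (π i) = i := (inv_iff π).mp hc.1
    have hne : ∀ j : Fin n, π j.succ ≠ 0 := by
      intro j hj
      have : π (π j.succ) = π 0 := by rw [hj]
      rw [hinv, h0] at this
      exact Fin.succ_ne_zero j this
    have hge : ∀ j : Fin n, 1 ≤ (π j.succ).val := by
      intro j
      have := hne j
      rcases Nat.eq_zero_or_pos (π j.succ).val with h | h
      · exact absurd (Fin.ext h) this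
      · exact h
    set τf : Fin n → Fin n := fun j => ⟨(π j.succ).val - 1, by
      have h1 := hge j
      have h2 := (π j.succ).isLt
      omega⟩ with hτf
    have hτsucc : ∀ j, (τf j).succ = π j.succ := by
      intro j
      apply Fin.ext
      have h1 := hge j
      simp [hτf, Fin.val_succ]
      omega
    have hτinv : Function.Involutive τf := by
      intro j
      apply Fin.ext
      have h2 : (τf (τf j)).succ = π (τf j).succ := hτsucc (τf j)
      rw [hτsucc j, hinv j.succ] at h2
      have := congrArg Fin.val h2
      simp [Fin.val_succ] at this
      exact this
    set τ : Equiv.Perm (Fin n) := hτinv.toPerm with hτ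
    have hτapp : ∀ j, τ j = τf j := fun j => by
      simp [hτ, Function.Involutive.coe_toPerm]
    have hτmul : τ * τ = 1 := by
      rw [inv_iff]
      intro j
      rw [hτapp, hτapp]
      exact hτinv j
    set e : Fin n → Bool := fun j => ε j.succ with he
    have hcond : Cond n K (if b then dd - 1 else dd + 1) (τ, e) := by
      refine (cond_shift1_iff π ε τ e h0 ?_ hb (fun i => rfl)).mp hc
      intro i
      rw [hτapp, hτsucc]
    refine ⟨⟨(τ, e), hcond⟩, ?_⟩
    apply Subtype.ext
    rw [Prod.mk.injEq]
    constructor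
    · apply Equiv.ext
      intro i
      refine Fin.cases ?_ ?_ i
      · rw [up1_apply, up1fun_zero, h0]
      · intro j
        rw [up1_apply, up1fun_succ, hτapp, hτsucc]
    · funext i
      refine Fin.cases ?_ ?_ i
      · rw [Fin.cases_zero]; exact hb.symm
      · intro j
        rw [Fin.cases_succ]

end Stmt10Aux

namespace Stmt10Aux

lemma fin_one_ne_zero (n : ℕ) : (1 : Fin (n+2)) ≠ 0 := by
  intro h
  have := congrArg Fin.val h
  simp at this

def up2fun {n : ℕ} (τ : Equiv.Perm (Fin n)) : Fin (n+2) → Fin (n+2) :=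
  Fin.cases 1 (Fin.cases 0 (fun m => (τ m).succ.succ))

@[simp] lemma up2fun_zero {n : ℕ} (τ : Equiv.Perm (Fin n)) : up2fun τ 0 = 1 :=
  Fin.cases_zero

@[simp] lemma up2fun_one {n : ℕ} (τ : Equiv.Perm (Fin n)) : up2fun τ 1 = 0 := by
  rw [← Fin.succ_zero_eq_one]
  rw [show up2fun τ (0 : Fin (n+1)).succ
      = (Fin.cases 0 (fun m => (τ m).succ.succ) : Fin (n+1) → Fin (n+2)) 0 from Fin.cases_succ _]
  exact Fin.cases_zero

@[simp] lemma up2fun_ss {n : ℕ} (τ : Equiv.Perm (Fin n)) (m : Fin n) :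
    up2fun τ m.succ.succ = (τ m).succ.succ := by
  rw [show up2fun τ (m.succ).succ
      = (Fin.cases 0 (fun m => (τ m).succ.succ) : Fin (n+1) → Fin (n+2)) m.succ from
      Fin.cases_succ _]
  exact Fin.cases_succ _

lemma up2fun_inv {n : ℕ} (τ : Equiv.Perm (Fin n)) (h : τ * τ = 1) :
    Function.Involutive (up2fun τ) := by
  rw [inv_iff] at h
  intro i
  refine Fin.cases ?_ (fun j => ?_) i
  · simp
  · refine Fin.cases ?_ (fun m => ?_) j
    · rw [Fin.succ_zero_eq_one]; simp
    · rw [up2fun_ss, up2fun_ss, h m]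

def up2 {n : ℕ} (τ : Equiv.Perm (Fin n)) (h : τ * τ = 1) : Equiv.Perm (Fin (n+2)) :=
  (up2fun_inv τ h).toPerm

@[simp] lemma up2_apply {n : ℕ} (τ : Equiv.Perm (Fin n)) (h : τ * τ = 1) (i : Fin (n+2)) :
    up2 τ h i = up2fun τ i := by
  simp [up2, Function.Involutive.coe_toPerm]

def eps2 {n : ℕ} (e : Fin n → Bool) : Fin (n+2) → Bool :=
  Fin.cases true (Fin.cases true e)

@[simp] lemma eps2_zero {n : ℕ} (e : Fin n → Bool) : eps2 e 0 = true := Fin.cases_zero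

@[simp] lemma eps2_one {n : ℕ} (e : Fin n → Bool) : eps2 e 1 = true := by
  rw [← Fin.succ_zero_eq_one]
  rw [show eps2 e (0 : Fin (n+1)).succ
      = (Fin.cases true e : Fin (n+1) → Bool) 0 from Fin.cases_succ _]
  exact Fin.cases_zero

@[simp] lemma eps2_ss {n : ℕ} (e : Fin n → Bool) (m : Fin n) :
    eps2 e m.succ.succ = e m := by
  rw [show eps2 e (m.succ).succ
      = (Fin.cases true e : Fin (n+1) → Bool) m.succ from Fin.cases_succ _]
  exact Fin.cases_succ _

lemma cond_shift2_iff {n K : ℕ} {dd : ℤ}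
    (π : Equiv.Perm (Fin (n+2))) (ε : Fin (n+2) → Bool)
    (τ : Equiv.Perm (Fin n)) (e : Fin n → Bool)
    (h0 : π 0 = 1) (h1 : π 1 = 0) (hs : ∀ m, π m.succ.succ = (τ m).succ.succ)
    (hε0 : ε 0 = true) (hε1 : ε 1 = true) (hεs : ∀ m, ε m.succ.succ = e m) :
    Cond (n+2) (K+1) dd (π, ε) ↔ Cond n K dd (τ, e) := by
  classical
  have hm0 : π 0 ≠ 0 := by rw [h0]; exact fin_one_ne_zero n
  have hm1 : π 1 ≠ 1 := by rw [h1]; exact (fin_one_ne_zero n).symm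
  have hfix : ∀ m : Fin n, (π m.succ.succ = m.succ.succ ↔ τ m = m) := by
    intro m; rw [hs m, Fin.succ_inj, Fin.succ_inj]
  have hsz : ((0 : Fin (n+1)).succ : Fin (n+2)) = 1 := Fin.succ_zero_eq_one
  have cT : (Finset.univ.filter fun i => π i = i ∧ ε i = true).card
      = (Finset.univ.filter fun m => τ m = m ∧ e m = true).card := by
    rw [card_succ, card_succ, if_neg (by simp [hm0]), if_neg (by rw [hsz]; simp [hm1])]
    simp only [zero_add]
    apply congrArg
    apply Finset.filter_congr
    intro m _
    rw [hfix m, hεs m]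
  have cF : (Finset.univ.filter fun i => π i = i ∧ ε i = false).card
      = (Finset.univ.filter fun m => τ m = m ∧ e m = false).card := by
    rw [card_succ, card_succ, if_neg (by simp [hm0]), if_neg (by rw [hsz]; simp [hm1])]
    simp only [zero_add]
    apply congrArg
    apply Finset.filter_congr
    intro m _
    rw [hfix m, hεs m]
  have cM : (Finset.univ.filter fun i => π i ≠ i).card
      = 2 + (Finset.univ.filter fun m => τ m ≠ m).card := by
    rw [card_succ, card_succ, if_pos hm0, if_pos (by rw [hsz]; exact hm1)]
    have : (Finset.univ.filter fun m : Fin n => π (m.succ).succ ≠ m.succ.succ).card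
        = (Finset.univ.filter fun m : Fin n => τ m ≠ m).card := by
      apply congrArg
      apply Finset.filter_congr
      intro m _
      rw [not_iff_not]
      exact hfix m
    omega
  unfold Cond
  dsimp only
  apply and_congr
  · rw [inv_iff, inv_iff]
    constructor
    · intro h m
      have := h m.succ.succ
      rw [hs m, hs (τ m)] at this
      exact Fin.succ_inj.mp (Fin.succ_inj.mp this)
    · intro h i
      refine Fin.cases ?_ (fun j => ?_) i
      · rw [h0, h1]
      · refine Fin.cases ?_ (fun m => ?_) j
        · rw [hsz, h1, h0]
        · rw [hs m, hs (τ m), h m]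
  apply and_congr
  · constructor
    · intro h m hm
      have h2 : π m.succ.succ ≠ m.succ.succ := by
        rw [hs m]
        intro hh
        exact hm (Fin.succ_inj.mp (Fin.succ_inj.mp hh))
      have := h m.succ.succ h2
      rwa [hεs m] at this
    · intro h i
      refine Fin.cases ?_ (fun j => ?_) i
      · intro _; exact hε0
      · refine Fin.cases ?_ (fun m => ?_) j
        · intro _; rw [hsz]; exact hε1
        · intro hm
          rw [hεs m]
          refine h m ?_
          intro hh
          exact hm (by rw [hs m, hh])
  apply and_congr
  · rw [cT, cF]
  · rw [cM]
    omega

lemma shift2 (n K : ℕ) (dd : ℤ) :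
    Nat.card {x : Equiv.Perm (Fin (n+2)) × (Fin (n+2) → Bool) //
        Cond (n+2) (K+1) dd x ∧ x.1 0 = 1}
      = g n K dd := by
  classical
  rw [g]
  symm
  apply Nat.card_eq_of_bijective
    (f := fun y => ⟨(up2 y.1.1 y.2.1, eps2 y.1.2), by
      obtain ⟨⟨τ, e⟩, h⟩ := y
      refine ⟨(cond_shift2_iff _ _ τ e (by simp) (by simp) (fun m => by simp)
        (by simp) (by simp) (fun m => by simp)).mpr h, by simp⟩⟩)
  constructor
  · rintro ⟨⟨τ, e⟩, hy⟩ ⟨⟨τ', e'⟩, hy'⟩ h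
    rw [Subtype.mk.injEq, Prod.mk.injEq] at h
    apply Subtype.ext
    rw [Prod.mk.injEq]
    constructor
    · apply Equiv.ext
      intro m
      have := congrFun (congrArg (fun (σ : Equiv.Perm (Fin (n+2))) =>
        (σ : Fin (n+2) → Fin (n+2))) h.1) m.succ.succ
      simpa using this
    · funext m
      have := congrFun h.2 m.succ.succ
      simpa using this
  · rintro ⟨⟨π, ε⟩, hc, h0⟩
    dsimp only at hc h0
    have hinv : ∀ i, π (π i) = i := (inv_iff π).mp hc.1
    have h1 : π 1 = 0 := by
      have := hinv 0
      rw [h0] at this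
      exact this
    have hne0 : ∀ m : Fin n, π m.succ.succ ≠ 0 := by
      intro m hm
      have : π (π m.succ.succ) = π 0 := by rw [hm]
      rw [hinv, h0] at this
      have := congrArg Fin.val this
      simp [Fin.val_succ] at this
    have hne1 : ∀ m : Fin n, π m.succ.succ ≠ 1 := by
      intro m hm
      have : π (π m.succ.succ) = π 1 := by rw [hm]
      rw [hinv, h1] at this
      have := congrArg Fin.val this
      simp [Fin.val_succ] at this
    have hge : ∀ m : Fin n, 2 ≤ (π m.succ.succ).val := by
      intro m
      have hn0 := hne0 m
      have hn1 := hne1 m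
      rcases Nat.lt_or_ge (π m.succ.succ).val 2 with h | h
      · interval_cases hv : (π m.succ.succ).val
        · exact absurd (Fin.ext (by simpa using hv)) hn0
        · exact absurd (Fin.ext (by simpa using hv)) hn1
      · exact h
    set τf : Fin n → Fin n := fun m => ⟨(π m.succ.succ).val - 2, by
      have h1 := hge m
      have h2 := (π m.succ.succ).isLt
      omega⟩ with hτf
    have hτss : ∀ m, ((τf m).succ.succ : Fin (n+2)) = π m.succ.succ := by
      intro m
      apply Fin.ext
      have h1 := hge m
      simp [hτf, Fin.val_succ]
      omega
    have hτinv : Function.Involutive τf := by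
      intro m
      apply Fin.ext
      have h2 : ((τf (τf m)).succ.succ : Fin (n+2)) = π (τf m).succ.succ := hτss (τf m)
      rw [hτss m, hinv m.succ.succ] at h2
      have := congrArg Fin.val h2
      simp [Fin.val_succ] at this
      exact this
    set τ : Equiv.Perm (Fin n) := hτinv.toPerm with hτ
    have hτapp : ∀ m, τ m = τf m := fun m => by
      simp [hτ, Function.Involutive.coe_toPerm]
    set e : Fin n → Bool := fun m => ε m.succ.succ with he
    have hε0 : ε 0 = true := hc.2.1 0 (by rw [h0]; exact fin_one_ne_zero n)
    have hε1 : ε 1 = true := hc.2.1 1 (by rw [h1]; exact (fin_one_ne_zero n).symm)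
    have hcond : Cond n K dd (τ, e) := by
      refine (cond_shift2_iff π ε τ e h0 h1 ?_ hε0 hε1 (fun m => rfl)).mp hc
      intro m
      rw [hτapp, hτss]
    refine ⟨⟨(τ, e), hcond⟩, ?_⟩
    apply Subtype.ext
    rw [Prod.mk.injEq]
    constructor
    · apply Equiv.ext
      intro i
      refine Fin.cases ?_ (fun j => ?_) i
      · rw [up2_apply, up2fun_zero, h0]
      · refine Fin.cases ?_ (fun m => ?_) j
        · rw [Fin.succ_zero_eq_one, up2_apply, up2fun_one, h1]
        · rw [up2_apply, up2fun_ss, hτapp, hτss]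
    · funext i
      refine Fin.cases ?_ (fun j => ?_) i
      · rw [eps2_zero]; exact hε0.symm
      · refine Fin.cases ?_ (fun m => ?_) j
        · rw [Fin.succ_zero_eq_one, eps2_one]; exact hε1.symm
        · rw [eps2_ss]

end Stmt10Aux

namespace Stmt10Aux


lemma shift1_true (n K : ℕ) (dd : ℤ) :
    Nat.card {x : Equiv.Perm (Fin (n+1)) × (Fin (n+1) → Bool) //
        Cond (n+1) K dd x ∧ x.1 0 = 0 ∧ x.2 0 = true}
      = g n K (dd - 1) := by
  have := shift1 n K dd true
  rwa [if_pos rfl] at this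

lemma shift1_false (n K : ℕ) (dd : ℤ) :
    Nat.card {x : Equiv.Perm (Fin (n+1)) × (Fin (n+1) → Bool) //
        Cond (n+1) K dd x ∧ x.1 0 = 0 ∧ x.2 0 = false}
      = g n K (dd + 1) := by
  have := shift1 n K dd false
  rwa [if_neg (by simp)] at this

lemma cond_swap {m K : ℕ} {d : ℤ} (a b : Fin m) (x : Equiv.Perm (Fin m) × (Fin m → Bool))
    (h : Cond m K d x) :
    Cond m K d (Equiv.swap a b * x.1 * Equiv.swap a b, fun i => x.2 (Equiv.swap a b i)) := by
  classical
  obtain ⟨h1, h2, h3, h4⟩ := h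
  set s := Equiv.swap a b with hsdef
  have hss : s * s = 1 := Equiv.swap_mul_self a b
  have happ : ∀ i, (s * x.1 * s) i = s (x.1 (s i)) := fun i => rfl
  have hfix : ∀ i, ((s * x.1 * s) i = i ↔ x.1 (s i) = s i) := by
    intro i
    rw [happ]
    constructor
    · intro h'
      have := congrArg s h'
      rwa [Equiv.swap_apply_self] at this
    · intro h'
      rw [h', Equiv.swap_apply_self]
  refine ⟨?_, ?_, ?_, ?_⟩
  · show (s * x.1 * s) * (s * x.1 * s) = 1
    simp only [mul_assoc]
    rw [← mul_assoc s s (x.1 * s), hss, one_mul, ← mul_assoc x.1 x.1 s, h1, one_mul, hss]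
  · intro i hi
    dsimp only
    apply h2
    intro he
    apply hi
    show (s * x.1 * s) i = i
    rw [happ, he, Equiv.swap_apply_self]
  · dsimp only
    have eT : (Finset.univ.filter fun i => (s * x.1 * s) i = i ∧ x.2 (s i) = true).card
        = (Finset.univ.filter fun i => x.1 i = i ∧ x.2 i = true).card := by
      rw [Finset.card_filter, Finset.card_filter]
      exact Fintype.sum_equiv s _ _ (fun i => by simp only [hfix i])
    have eF : (Finset.univ.filter fun i => (s * x.1 * s) i = i ∧ x.2 (s i) = false).card
        = (Finset.univ.filter fun i => x.1 i = i ∧ x.2 i = false).card := by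
      rw [Finset.card_filter, Finset.card_filter]
      exact Fintype.sum_equiv s _ _ (fun i => by simp only [hfix i])
    rw [eT, eF]
    exact h3
  · dsimp only
    have eM : (Finset.univ.filter fun i => (s * x.1 * s) i ≠ i).card
        = (Finset.univ.filter fun i => x.1 i ≠ i).card := by
      rw [Finset.card_filter, Finset.card_filter]
      exact Fintype.sum_equiv s _ _ (fun i => by simp only [ne_eq, hfix i])
    rw [eM]
    exact h4

lemma conj_card (n K : ℕ) (d : ℤ) (j : Fin (n+2)) (hj : j ≠ 0) :
    Nat.card {x : Equiv.Perm (Fin (n+2)) × (Fin (n+2) → Bool) //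
        Cond (n+2) K d x ∧ x.1 0 = j}
      = Nat.card {x : Equiv.Perm (Fin (n+2)) × (Fin (n+2) → Bool) //
        Cond (n+2) K d x ∧ x.1 0 = 1} := by
  classical
  have h01 : (0 : Fin (n+2)) ≠ 1 := (fin_one_ne_zero n).symm
  set s := Equiv.swap (1 : Fin (n+2)) j with hsdef
  have hs0 : s 0 = 0 := Equiv.swap_apply_of_ne_of_ne h01 hj.symm
  have hss : s * s = 1 := Equiv.swap_mul_self 1 j
  symm
  apply Nat.card_congr
  refine ⟨fun x => ⟨(s * x.1.1 * s, fun i => x.1.2 (s i)), cond_swap 1 j x.1 x.2.1, ?_⟩,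
    fun y => ⟨(s * y.1.1 * s, fun i => y.1.2 (s i)), cond_swap 1 j y.1 y.2.1, ?_⟩, ?_, ?_⟩
  · show (s * x.1.1 * s) 0 = j
    show s (x.1.1 (s 0)) = j
    rw [hs0, x.2.2, hsdef, Equiv.swap_apply_left]
  · show (s * y.1.1 * s) 0 = 1
    show s (y.1.1 (s 0)) = 1
    rw [hs0, y.2.2, hsdef, Equiv.swap_apply_right]
  · intro x
    apply Subtype.ext
    rw [Prod.mk.injEq]
    constructor
    · show s * (s * x.1.1 * s) * s = x.1.1
      calc s * (s * x.1.1 * s) * s = s * s * x.1.1 * (s * s) := by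
            simp only [mul_assoc]
        _ = x.1.1 := by rw [hss, one_mul, mul_one]
    · funext i
      show x.1.2 (s (s i)) = x.1.2 i
      rw [Equiv.swap_apply_self]
  · intro y
    apply Subtype.ext
    rw [Prod.mk.injEq]
    constructor
    · show s * (s * y.1.1 * s) * s = y.1.1
      calc s * (s * y.1.1 * s) * s = s * s * y.1.1 * (s * s) := by
            simp only [mul_assoc]
        _ = y.1.1 := by rw [hss, one_mul, mul_one]
    · funext i
      show y.1.2 (s (s i)) = y.1.2 i
      rw [Equiv.swap_apply_self]

lemma R1 (n : ℕ) (d : ℤ) : g (n+1) 0 d = g n 0 (d - 1) + g n 0 (d + 1) := by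
  classical
  rw [g, card_split (Cond (n+1) 0 d) (fun x => x.1 0), Fin.sum_univ_succ]
  have hzero : ∀ i : Fin n,
      Nat.card {x : Equiv.Perm (Fin (n+1)) × (Fin (n+1) → Bool) //
        Cond (n+1) 0 d x ∧ x.1 0 = i.succ} = 0 := by
    intro i
    have : IsEmpty {x : Equiv.Perm (Fin (n+1)) × (Fin (n+1) → Bool) //
        Cond (n+1) 0 d x ∧ x.1 0 = i.succ} := by
      refine ⟨fun x => ?_⟩
      obtain ⟨x, hc, h0⟩ := x
      have hid : x.1 = 1 := perm_eq_one_of_moved_zero (by simpa using hc.2.2.2)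
      rw [hid] at h0
      exact Fin.succ_ne_zero i h0.symm
    exact @Nat.card_of_isEmpty _ this
  rw [Finset.sum_congr rfl (fun i _ => hzero i), Finset.sum_const, smul_zero, add_zero]
  rw [card_split (fun x : Equiv.Perm (Fin (n+1)) × (Fin (n+1) → Bool) =>
    Cond (n+1) 0 d x ∧ x.1 0 = 0) (fun x => x.2 0), Fintype.sum_bool]
  have e1 : Nat.card {x : Equiv.Perm (Fin (n+1)) × (Fin (n+1) → Bool) //
      (Cond (n+1) 0 d x ∧ x.1 0 = 0) ∧ x.2 0 = true} = g n 0 (d - 1) := by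
    rw [Nat.card_congr (Equiv.subtypeEquivRight (fun x => and_assoc))]
    exact shift1_true n 0 d
  have e2 : Nat.card {x : Equiv.Perm (Fin (n+1)) × (Fin (n+1) → Bool) //
      (Cond (n+1) 0 d x ∧ x.1 0 = 0) ∧ x.2 0 = false} = g n 0 (d + 1) := by
    rw [Nat.card_congr (Equiv.subtypeEquivRight (fun x => and_assoc))]
    exact shift1_false n 0 d
  rw [e1, e2]

lemma R2 (n k : ℕ) (d : ℤ) :
    g (n+2) (k+1) d = g (n+1) (k+1) (d - 1) + g (n+1) (k+1) (d + 1) + (n+1) * g n k d := by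
  classical
  rw [g, card_split (Cond (n+2) (k+1) d) (fun x => x.1 0), Fin.sum_univ_succ]
  have hsucc : ∀ i : Fin (n+1),
      Nat.card {x : Equiv.Perm (Fin (n+2)) × (Fin (n+2) → Bool) //
        Cond (n+2) (k+1) d x ∧ x.1 0 = i.succ} = g n k d := by
    intro i
    rw [conj_card n (k+1) d i.succ (Fin.succ_ne_zero i)]
    exact shift2 n k d
  rw [Finset.sum_congr rfl (fun i _ => hsucc i), Finset.sum_const]
  rw [card_split (fun x : Equiv.Perm (Fin (n+2)) × (Fin (n+2) → Bool) =>
    Cond (n+2) (k+1) d x ∧ x.1 0 = 0) (fun x => x.2 0), Fintype.sum_bool]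
  have e1 : Nat.card {x : Equiv.Perm (Fin (n+2)) × (Fin (n+2) → Bool) //
      (Cond (n+2) (k+1) d x ∧ x.1 0 = 0) ∧ x.2 0 = true} = g (n+1) (k+1) (d - 1) := by
    rw [Nat.card_congr (Equiv.subtypeEquivRight (fun x => and_assoc))]
    exact shift1_true (n+1) (k+1) d
  have e2 : Nat.card {x : Equiv.Perm (Fin (n+2)) × (Fin (n+2) → Bool) //
      (Cond (n+2) (k+1) d x ∧ x.1 0 = 0) ∧ x.2 0 = false} = g (n+1) (k+1) (d + 1) := by
    rw [Nat.card_congr (Equiv.subtypeEquivRight (fun x => and_assoc))]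
    exact shift1_false (n+1) (k+1) d
  rw [e1, e2]
  simp only [Finset.card_univ, Fintype.card_fin, smul_eq_mul]

end Stmt10Aux

namespace Stmt10Aux

open Polynomial

lemma key : ∀ N p q : ℕ, p + q ≤ N →
    (∑ k ∈ Finset.range (q + 1),
      Polynomial.C (g (p + q) k ((p : ℤ) - (q : ℤ))) * Polynomial.X ^ k) = F p q := by
  intro N
  induction N with
  | zero =>
      intro p q h
      have hp : p = 0 := by omega
      have hq : q = 0 := by omega
      subst hp; subst hq
      rw [F_p0]
      rw [Finset.sum_range_succ, Finset.sum_range_zero, zero_add, pow_zero, mul_one]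
      rw [show ((0:ℕ):ℤ) - ((0:ℕ):ℤ) = (((0:ℕ) + 0 : ℕ) : ℤ) by norm_num]
      rw [g_diag]
      simp
  | succ N ih =>
      intro p q h
      rcases q with _ | q
      · -- q = 0
        rw [F_p0]
        rw [Finset.sum_range_succ, Finset.sum_range_zero, zero_add, pow_zero, mul_one]
        rw [show ((p:ℕ):ℤ) - ((0:ℕ):ℤ) = (((p:ℕ) + 0 : ℕ) : ℤ) by push_cast; ring]
        rw [g_diag]
        simp
      · rcases p with _ | p
        · -- p = 0
          rw [F_0q]
          rw [Finset.sum_range_succ']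
          have hz : ∀ k, g (0 + (q+1)) (k+1) (((0:ℕ):ℤ) - ((q+1:ℕ):ℤ)) = 0 := by
            intro k
            apply g_eq_zero
            omega
          have hzz : ∀ k ∈ Finset.range (q+1),
              Polynomial.C (g (0 + (q+1)) (k+1) (((0:ℕ):ℤ) - ((q+1:ℕ):ℤ)))
                * Polynomial.X ^ (k+1) = 0 := by
            intro k _
            rw [hz k, map_zero, zero_mul]
          rw [Finset.sum_congr rfl hzz, Finset.sum_const_zero, zero_add, pow_zero, mul_one]
          rw [show (((0:ℕ):ℤ) - ((q+1:ℕ):ℤ)) = -((((0:ℕ) + (q+1) : ℕ)) : ℤ) by push_cast; ring]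
          rw [g_antidiag]
          simp
        · -- main case
          have hn : (p+1) + (q+1) = p + q + 2 := by ring
          have hd : ((p+1:ℕ):ℤ) - ((q+1:ℕ):ℤ) = (p:ℤ) - (q:ℤ) := by push_cast; ring
          simp only [hn, hd]
          rw [Finset.sum_range_succ']
          have hsplit : ∀ k ∈ Finset.range (q+1),
              Polynomial.C (g (p+q+2) (k+1) ((p:ℤ) - (q:ℤ))) * Polynomial.X ^ (k+1)
              = Polynomial.C (g (p+q+1) (k+1) ((p:ℤ) - (q:ℤ) - 1)) * Polynomial.X ^ (k+1)
                + Polynomial.C (g (p+q+1) (k+1) ((p:ℤ) - (q:ℤ) + 1)) * Polynomial.X ^ (k+1)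
                + Polynomial.C (p+q+1) * Polynomial.X
                    * (Polynomial.C (g (p+q) k ((p:ℤ) - (q:ℤ))) * Polynomial.X ^ k) := by
            intro k _
            rw [R2 (p+q) k ((p:ℤ) - (q:ℤ)), map_add, map_add, map_mul]
            ring
          rw [Finset.sum_congr rfl hsplit, Finset.sum_add_distrib, Finset.sum_add_distrib,
            ← Finset.mul_sum]
          have hconst : Polynomial.C (g (p+q+2) 0 ((p:ℤ) - (q:ℤ))) * Polynomial.X ^ 0
              = Polynomial.C (g (p+q+1) 0 ((p:ℤ) - (q:ℤ) - 1)) * Polynomial.X ^ 0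
                + Polynomial.C (g (p+q+1) 0 ((p:ℤ) - (q:ℤ) + 1)) * Polynomial.X ^ 0 := by
            rw [R1 (p+q+1) ((p:ℤ) - (q:ℤ)), map_add]
            ring
          rw [hconst]
          have hA : (∑ k ∈ Finset.range (q+1),
                Polynomial.C (g (p+q+1) (k+1) ((p:ℤ) - (q:ℤ) - 1)) * Polynomial.X ^ (k+1))
              + Polynomial.C (g (p+q+1) 0 ((p:ℤ) - (q:ℤ) - 1)) * Polynomial.X ^ 0
              = F p (q+1) := by
            rw [← Finset.sum_range_succ'
              (fun k => Polynomial.C (g (p+q+1) k ((p:ℤ) - (q:ℤ) - 1)) * Polynomial.X ^ k)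
              (q+1)]
            have hh := ih p (q+1) (by omega)
            simp only [show p + (q+1) = p+q+1 from by ring,
              show (p:ℤ) - ((q+1:ℕ):ℤ) = (p:ℤ) - (q:ℤ) - 1 from by push_cast; ring] at hh
            exact hh
          have hB : (∑ k ∈ Finset.range (q+1),
                Polynomial.C (g (p+q+1) (k+1) ((p:ℤ) - (q:ℤ) + 1)) * Polynomial.X ^ (k+1))
              + Polynomial.C (g (p+q+1) 0 ((p:ℤ) - (q:ℤ) + 1)) * Polynomial.X ^ 0
              = F (p+1) q := by
            rw [← Finset.sum_range_succ'
              (fun k => Polynomial.C (g (p+q+1) k ((p:ℤ) - (q:ℤ) + 1)) * Polynomial.X ^ k)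
              (q+1), Finset.sum_range_succ]
            have hvan : g (p+q+1) (q+1) ((p:ℤ) - (q:ℤ) + 1) = 0 := by
              apply g_eq_zero
              omega
            rw [hvan, map_zero, zero_mul, add_zero]
            have hh := ih (p+1) q (by omega)
            simp only [show (p+1) + q = p+q+1 from by ring,
              show ((p+1:ℕ):ℤ) - ((q:ℕ):ℤ) = (p:ℤ) - (q:ℤ) + 1 from by push_cast; ring] at hh
            exact hh
          have hC : (∑ k ∈ Finset.range (q+1),
                Polynomial.C (g (p+q) k ((p:ℤ) - (q:ℤ))) * Polynomial.X ^ k) = F p q :=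
            ih p q (by omega)
          have hCnat : (Polynomial.C (p+q+1 : ℕ) : Polynomial ℕ)
              = ((p+q+1 : ℕ) : Polynomial ℕ) := by
            simp
          rw [F_rec, ← hA, ← hB, ← hC, hCnat]
          ring

end Stmt10Aux


theorem stmt10 (p q : ℕ) :
    (∑ k ∈ Finset.range (q + 1), Polynomial.C (gammaCount k p q) * Polynomial.X ^ k :
        Polynomial ℕ) =
      ∑ᶠ W : {l : List (DStep × ℕ) // IsWeightedDelannoy p q l},
        (Polynomial.X : Polynomial ℕ) ^ dcount W.1 := by
  have h1 : ∀ k, gammaCount k p q = Stmt10Aux.g (p + q) k ((p : ℤ) - (q : ℤ)) := by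
    intro k
    apply Nat.card_congr
    apply Equiv.subtypeEquivRight
    intro x
    unfold IsSignedInv Stmt10Aux.Cond
    tauto
  have h2 := Stmt10Aux.key (p + q) p q le_rfl
  rw [Finset.sum_congr rfl (fun k _ => by rw [h1 k])]
  exact h2
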